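/- For every finite alphabet Σ and every finite integer k ≥ 0 there exists a finite bound T = T(|Σ|, k) such that every set S of k finite words over Σ admits a d-parameter envelope with d ≤ T; that is, there exists a d-parameter word W with d ≤ T and a set S' of words over Σ with W(S') = S. -/

import Mathlib

set_option linter.unusedSectionVars false


/-- `W` is a `k`-parameter word over the alphabet `σ` (letters are `Sum.inl`, parameters
`λ_i` are `Sum.inr i`): all parameters are among `λ_0, …, λ_{k-1}`, every such parameter
occurs, and before every occurrence of `λ_j` there is an occurrence of `λ_i` for all
`i < j` (equivalently, first occurrences of parameters come in increasing order).
A `0`-parameter word is just a word over `σ`. -/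
def IsPWord {σ : Type} (k : ℕ) (W : List (σ ⊕ ℕ)) : Prop :=
  (∀ i : ℕ, Sum.inr i ∈ W → i < k) ∧
  (∀ i : ℕ, i < k → Sum.inr i ∈ W) ∧
  (∀ i j : ℕ, i < j → ∀ p : Fin W.length, W.get p = Sum.inr j →
    ∃ q : Fin W.length, q < p ∧ W.get q = Sum.inr i)

/-- Substitution `W(U)`: replace each occurrence of the parameter `λ_i` in `W` by `U_i`
and truncate just before the first occurrence of a parameter `λ_i` with `i ≥ |U|`. -/
def subst {σ : Type} (W U : List (σ ⊕ ℕ)) : List (σ ⊕ ℕ) :=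
  (W.takeWhile fun a =>
    match a with
    | Sum.inl _ => true
    | Sum.inr i => decide (i < U.length)).map fun a =>
      match a with
      | Sum.inl s => Sum.inl s
      | Sum.inr i => U.getD i (Sum.inr 0)

/-- `W` is a `d`-parameter envelope of `S` with embedding type `S'`: `W(S') = S`,
where `S'` is a set of words over `σ` of length at most `d`. -/
def IsEnvelopeOf {σ : Type} [DecidableEq σ] (d : ℕ) (W : List (σ ⊕ ℕ))
    (S S' : Finset (List (σ ⊕ ℕ))) : Prop :=
  IsPWord d W ∧ (∀ w ∈ S', IsPWord 0 w ∧ w.length ≤ d) ∧ S'.image (subst W) = S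

namespace EnvAux

open List

/-! ### generic takeWhile lemmas -/

theorem takeWhile_eq_take {α : Type*} (p : α → Bool) :
    ∀ (l : List α) (n : ℕ), (∀ i (h : i < l.length), i < n → p (l[i]'h) = true) →
      (∀ h : n < l.length, p (l[n]'h) = false) → l.takeWhile p = l.take n
  | [], n, _, _ => by simp
  | a :: l, 0, _, h2 => by
      have := h2 (by simp)
      simp only [List.getElem_cons_zero] at this
      simp [List.takeWhile_cons, this]
  | a :: l, n+1, h1, h2 => by
      have ha : p a = true := h1 0 (by simp) (Nat.succ_pos _)
      rw [List.take_succ_cons, List.takeWhile_cons, if_pos ha]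
      congr 1
      exact takeWhile_eq_take p l n
        (fun i h hn => h1 (i+1) (by simp only [List.length_cons]; omega) (by omega))
        (fun h => h2 (by simp only [List.length_cons]; omega))

theorem pred_getElem_length_takeWhile {α : Type*} (p : α → Bool) :
    ∀ (l : List α) (h : (l.takeWhile p).length < l.length),
      p (l[(l.takeWhile p).length]'h) = false
  | a :: l, h => by
      cases hpa : p a with
      | false => simp [List.takeWhile_cons, hpa]
      | true =>
        have hlen : ((a :: l).takeWhile p).length = (l.takeWhile p).length + 1 := by
          simp [List.takeWhile_cons, hpa]
        have h' : (l.takeWhile p).length < l.length := by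
          simpa [hlen] using h
        have := pred_getElem_length_takeWhile p l h'
        simp only [hlen, List.getElem_cons_succ]
        exact this

theorem getElem_takeWhile {α : Type*} (p : α → Bool) (l : List α) {i : ℕ}
    (h : i < (l.takeWhile p).length) :
    (l.takeWhile p)[i] = l[i]'(lt_of_lt_of_le h (l.takeWhile_prefix p).length_le) :=
  (l.takeWhile_prefix p).getElem h

theorem pred_getElem_of_lt_length_takeWhile {α : Type*} (p : α → Bool) (l : List α) {i : ℕ}
    (h : i < (l.takeWhile p).length) :
    p (l[i]'(lt_of_lt_of_le h (l.takeWhile_prefix p).length_le)) = true := by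
  rw [← getElem_takeWhile p l h]
  exact List.mem_takeWhile_imp (List.getElem_mem _)

/-! ### the construction -/

variable {σ : Type} [DecidableEq σ]

def sameCol (S : Finset (List (σ ⊕ ℕ))) (p q : ℕ) : Prop := ∀ w ∈ S, w[p]? = w[q]?

instance instDecSameCol (S : Finset (List (σ ⊕ ℕ))) (p q : ℕ) : Decidable (sameCol S p q) := by
  unfold sameCol; infer_instance

theorem sameCol_refl (S : Finset (List (σ ⊕ ℕ))) (p : ℕ) : sameCol S p p := fun _ _ => rfl

theorem sameCol_trans {S : Finset (List (σ ⊕ ℕ))} {p q r : ℕ}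
    (h1 : sameCol S p q) (h2 : sameCol S q r) : sameCol S p r :=
  fun w hw => (h1 w hw).trans (h2 w hw)

def isLet (S : Finset (List (σ ⊕ ℕ))) (p : ℕ) : Prop :=
  ∃ s : σ, ∀ w ∈ S, w[p]? = some (Sum.inl s)

def LL (S : Finset (List (σ ⊕ ℕ))) : ℕ := S.sup List.length

open Classical in
noncomputable def posList (S : Finset (List (σ ⊕ ℕ))) : List ℕ :=
  (List.range (LL S)).filter fun p => decide (¬ isLet S p ∧ ∀ q < p, ¬ sameCol S q p)

noncomputable def dd (S : Finset (List (σ ⊕ ℕ))) : ℕ := (posList S).length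

def firstOcc (S : Finset (List (σ ⊕ ℕ))) (p : ℕ) : ℕ :=
  Nat.find (⟨p, sameCol_refl S p⟩ : ∃ q, sameCol S q p)

noncomputable def idx (S : Finset (List (σ ⊕ ℕ))) (p : ℕ) : ℕ :=
  (posList S).idxOf (firstOcc S p)

open Classical in
noncomputable def Wd (S : Finset (List (σ ⊕ ℕ))) : List (σ ⊕ ℕ) :=
  (List.range (LL S)).map fun p =>
    if h : isLet S p then Sum.inl h.choose else Sum.inr (idx S p)

noncomputable def Uw (S : Finset (List (σ ⊕ ℕ))) (w : List (σ ⊕ ℕ)) : List (σ ⊕ ℕ) :=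
  ((posList S).takeWhile fun q => decide (q < w.length)).map fun q => w.getD q (Sum.inr 0)

/-! ### posList lemmas -/

theorem mem_posList {S : Finset (List (σ ⊕ ℕ))} {q : ℕ} :
    q ∈ posList S ↔ q < LL S ∧ ¬ isLet S q ∧ ∀ q' < q, ¬ sameCol S q' q := by
  simp [posList, List.mem_filter, List.mem_range, decide_eq_true_eq, and_assoc]

theorem sorted_posList (S : Finset (List (σ ⊕ ℕ))) : (posList S).Pairwise (· < ·) :=
  (List.pairwise_lt_range).sublist List.filter_sublist

theorem nodup_posList (S : Finset (List (σ ⊕ ℕ))) : (posList S).Nodup :=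
  (sorted_posList S).imp fun h => ne_of_lt h

theorem posList_strictMono {S : Finset (List (σ ⊕ ℕ))} {i j : ℕ}
    (hi : i < dd S) (hj : j < dd S) (hij : i < j) :
    (posList S)[i]'hi < (posList S)[j]'hj :=
  List.pairwise_iff_getElem.1 (sorted_posList S) i j hi hj hij

theorem posList_lt_LL {S : Finset (List (σ ⊕ ℕ))} {i : ℕ} (hi : i < dd S) :
    (posList S)[i]'hi < LL S :=
  (mem_posList.1 (List.getElem_mem hi)).1

theorem not_isLet_posList {S : Finset (List (σ ⊕ ℕ))} {i : ℕ} (hi : i < dd S) :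
    ¬ isLet S ((posList S)[i]'hi) :=
  (mem_posList.1 (List.getElem_mem hi)).2.1

theorem not_sameCol_posList {S : Finset (List (σ ⊕ ℕ))} {i j : ℕ}
    (hi : i < dd S) (hj : j < dd S) (hij : i < j) :
    ¬ sameCol S ((posList S)[i]'hi) ((posList S)[j]'hj) :=
  (mem_posList.1 (List.getElem_mem hj)).2.2 _ (posList_strictMono hi hj hij)

/-! ### firstOcc / idx lemmas -/

theorem sameCol_firstOcc (S : Finset (List (σ ⊕ ℕ))) (p : ℕ) :
    sameCol S (firstOcc S p) p := by
  unfold firstOcc; exact Nat.find_spec (⟨p, sameCol_refl S p⟩ : ∃ q, sameCol S q p)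

theorem firstOcc_le (S : Finset (List (σ ⊕ ℕ))) (p : ℕ) : firstOcc S p ≤ p := by
  unfold firstOcc; exact Nat.find_le (sameCol_refl S p)

theorem firstOcc_min {S : Finset (List (σ ⊕ ℕ))} {p q : ℕ} (h : q < firstOcc S p) :
    ¬ sameCol S q p := by
  unfold firstOcc at h; exact Nat.find_min (⟨p, sameCol_refl S p⟩ : ∃ q, sameCol S q p) h

theorem isLet_congr {S : Finset (List (σ ⊕ ℕ))} {p q : ℕ} (h : sameCol S p q) :
    isLet S p ↔ isLet S q := by
  constructor <;> rintro ⟨s, hs⟩ <;> refine ⟨s, fun w hw => ?_⟩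
  · rw [← h w hw]; exact hs w hw
  · rw [h w hw]; exact hs w hw

theorem firstOcc_mem_posList {S : Finset (List (σ ⊕ ℕ))} {p : ℕ}
    (hp : p < LL S) (hl : ¬ isLet S p) : firstOcc S p ∈ posList S := by
  rw [mem_posList]
  refine ⟨lt_of_le_of_lt (firstOcc_le S p) hp, ?_, ?_⟩
  · rw [isLet_congr (sameCol_firstOcc S p)]; exact hl
  · intro q hq hqc
    exact firstOcc_min hq (sameCol_trans hqc (sameCol_firstOcc S p))

theorem idx_lt {S : Finset (List (σ ⊕ ℕ))} {p : ℕ}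
    (hp : p < LL S) (hl : ¬ isLet S p) : idx S p < dd S :=
  List.idxOf_lt_length_iff.2 (firstOcc_mem_posList hp hl)

theorem getElem_posList_idx {S : Finset (List (σ ⊕ ℕ))} {p : ℕ}
    (hp : p < LL S) (hl : ¬ isLet S p) :
    (posList S)[idx S p]'(idx_lt hp hl) = firstOcc S p :=
  List.getElem_idxOf _

theorem idx_getElem {S : Finset (List (σ ⊕ ℕ))} {i : ℕ} (hi : i < dd S) :
    idx S ((posList S)[i]'hi) = i := by
  have hfo : firstOcc S ((posList S)[i]'hi) = (posList S)[i]'hi := by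
    refine le_antisymm (firstOcc_le _ _) ?_
    by_contra hlt
    push_neg at hlt
    exact (mem_posList.1 (List.getElem_mem hi)).2.2 _ hlt (sameCol_firstOcc _ _)
  rw [idx, hfo]
  exact (nodup_posList S).idxOf_getElem i hi

/-! ### Uw lemmas -/

theorem length_Uw {S : Finset (List (σ ⊕ ℕ))} (w : List (σ ⊕ ℕ)) :
    (Uw S w).length = ((posList S).takeWhile fun q => decide (q < w.length)).length := by
  simp [Uw]

theorem length_Uw_le {S : Finset (List (σ ⊕ ℕ))} (w : List (σ ⊕ ℕ)) :
    (Uw S w).length ≤ dd S := by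
  rw [length_Uw]
  exact ((posList S).takeWhile_prefix _).length_le

theorem posList_lt_of_lt_length_Uw {S : Finset (List (σ ⊕ ℕ))} {w : List (σ ⊕ ℕ)} {i : ℕ}
    (h : i < (Uw S w).length) :
    (posList S)[i]'(lt_of_lt_of_le h (length_Uw_le w)) < w.length := by
  rw [length_Uw] at h
  have := pred_getElem_of_lt_length_takeWhile (fun q => decide (q < w.length)) (posList S) h
  exact of_decide_eq_true this

theorem lt_length_Uw {S : Finset (List (σ ⊕ ℕ))} {w : List (σ ⊕ ℕ)} {i : ℕ}
    (hi : i < dd S) (h : (posList S)[i]'hi < w.length) : i < (Uw S w).length := by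
  by_contra hge
  push_neg at hge
  rw [length_Uw] at hge
  have hm : ((posList S).takeWhile fun q => decide (q < w.length)).length < dd S :=
    lt_of_le_of_lt hge hi
  have hfail := pred_getElem_length_takeWhile (fun q => decide (q < w.length)) (posList S) hm
  simp only [decide_eq_false_iff_not, not_lt] at hfail
  -- posList[m] ≥ w.length but posList[m] ≤ posList[i] < w.length
  rcases lt_or_eq_of_le hge with hlt | heq
  · have := posList_strictMono hm hi hlt
    omega
  · have heq2 : (posList S)[((posList S).takeWhile fun q => decide (q < w.length)).length]'hm
        = (posList S)[i]'hi := by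
      exact getElem_congr_idx heq
    omega

theorem getElem_Uw {S : Finset (List (σ ⊕ ℕ))} {w : List (σ ⊕ ℕ)} {i : ℕ}
    (h : i < (Uw S w).length) :
    (Uw S w)[i] = w.getD ((posList S)[i]'(lt_of_lt_of_le h (length_Uw_le w))) (Sum.inr 0) := by
  simp only [Uw, List.getElem_map]
  congr 1
  exact getElem_takeWhile _ _ (by simpa [Uw] using h)


/-! ### Wd lemmas -/

theorem length_Wd (S : Finset (List (σ ⊕ ℕ))) : (Wd S).length = LL S := by simp [Wd]

open Classical in
theorem getElem_Wd {S : Finset (List (σ ⊕ ℕ))} {p : ℕ} (hp : p < LL S) :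
    (Wd S)[p]'(by rw [length_Wd]; exact hp) =
      if h : isLet S p then Sum.inl h.choose else Sum.inr (idx S p) := by
  simp only [Wd, List.getElem_map, List.getElem_range]

theorem not_isLet_of_len {S : Finset (List (σ ⊕ ℕ))} {w : List (σ ⊕ ℕ)} (hw : w ∈ S)
    {p : ℕ} (h : w.length ≤ p) : ¬ isLet S p := by
  rintro ⟨s, hs⟩
  have := hs w hw
  rw [List.getElem?_eq_none h] at this
  cases this

theorem firstOcc_lt_length {S : Finset (List (σ ⊕ ℕ))} {w : List (σ ⊕ ℕ)} (hw : w ∈ S)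
    {q : ℕ} (hq : q < w.length) : firstOcc S q < w.length := by
  by_contra hge
  push_neg at hge
  have hcol := sameCol_firstOcc S q w hw
  rw [List.getElem?_eq_none hge, List.getElem?_eq_getElem hq] at hcol
  cases hcol

theorem idx_lt_length_Uw {S : Finset (List (σ ⊕ ℕ))} {w : List (σ ⊕ ℕ)} (hw : w ∈ S)
    {q : ℕ} (hq : q < w.length) (hl : ¬ isLet S q) : idx S q < (Uw S w).length := by
  have hqL : q < LL S := lt_of_lt_of_le hq (Finset.le_sup hw)
  have hj := idx_lt hqL hl
  apply lt_length_Uw hj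
  rw [getElem_posList_idx hqL hl]
  exact firstOcc_lt_length hw hq

theorem getElem_Uw_idx {S : Finset (List (σ ⊕ ℕ))} {w : List (σ ⊕ ℕ)} (hw : w ∈ S)
    {q : ℕ} (hq : q < w.length) (hl : ¬ isLet S q)
    (h : idx S q < (Uw S w).length) : (Uw S w)[idx S q]'h = w[q] := by
  rw [getElem_Uw h]
  have hqL : q < LL S := lt_of_lt_of_le hq (Finset.le_sup hw)
  have hfo : (posList S)[idx S q]'(lt_of_lt_of_le h (length_Uw_le w)) = firstOcc S q :=
    getElem_posList_idx hqL hl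
  rw [hfo]
  have hflt : firstOcc S q < w.length := firstOcc_lt_length hw hq
  rw [List.getD_eq_getElem _ _ hflt]
  have hcol := sameCol_firstOcc S q w hw
  rw [List.getElem?_eq_getElem hflt, List.getElem?_eq_getElem hq] at hcol
  exact Option.some.inj hcol

/-! ### main substitution lemma -/

theorem subst_Uw {S : Finset (List (σ ⊕ ℕ))} {w : List (σ ⊕ ℕ)} (hw : w ∈ S) :
    subst (Wd S) (Uw S w) = w := by
  have hL : w.length ≤ LL S := Finset.le_sup hw
  have htw : ((Wd S).takeWhile fun a =>
      match a with
      | Sum.inl _ => true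
      | Sum.inr i => decide (i < (Uw S w).length)) = (Wd S).take w.length := by
    apply takeWhile_eq_take
    · intro i hi hn
      rw [length_Wd] at hi
      rw [getElem_Wd hi]
      by_cases h : isLet S i
      · rw [dif_pos h]
      · rw [dif_neg h]
        exact decide_eq_true (idx_lt_length_Uw hw hn h)
    · intro h
      have hlt : w.length < LL S := by rwa [length_Wd] at h
      rw [getElem_Wd hlt]
      have hnl : ¬ isLet S w.length := not_isLet_of_len hw le_rfl
      rw [dif_neg hnl]
      apply decide_eq_false
      intro hcon
      have hp := posList_lt_of_lt_length_Uw hcon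
      rw [getElem_posList_idx hlt hnl] at hp
      have hcol := sameCol_firstOcc S w.length w hw
      rw [List.getElem?_eq_none (le_refl w.length), List.getElem?_eq_getElem hp] at hcol
      cases hcol
  unfold subst
  rw [htw]
  apply List.ext_getElem
  · simp [length_Wd, Nat.min_eq_left hL]
  · intro q h1 h2
    simp only [List.getElem_map, List.getElem_take]
    have hqL : q < LL S := lt_of_lt_of_le h2 hL
    rw [getElem_Wd hqL]
    by_cases h : isLet S q
    · rw [dif_pos h]
      have hs := h.choose_spec w hw
      rw [List.getElem?_eq_getElem h2] at hs
      exact (Option.some.inj hs).symm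
    · rw [dif_neg h]
      have hlt : idx S q < (Uw S w).length := idx_lt_length_Uw hw h2 h
      show (Uw S w).getD (idx S q) (Sum.inr 0) = w[q]
      rw [List.getD_eq_getElem _ _ hlt]
      exact getElem_Uw_idx hw h2 h hlt

/-! ### Wd is a parameter word -/

theorem isPWord_Wd (S : Finset (List (σ ⊕ ℕ))) : IsPWord (dd S) (Wd S) := by
  refine ⟨?_, ?_, ?_⟩
  · intro i hi
    rw [Wd, List.mem_map] at hi
    obtain ⟨p, hp, heq⟩ := hi
    rw [List.mem_range] at hp
    by_cases h : isLet S p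
    · rw [dif_pos h] at heq; cases heq
    · rw [dif_neg h] at heq
      cases heq
      exact idx_lt hp h
  · intro i hi
    rw [Wd, List.mem_map]
    refine ⟨(posList S)[i]'hi, List.mem_range.2 (posList_lt_LL hi), ?_⟩
    rw [dif_neg (not_isLet_posList hi), idx_getElem hi]
  · intro i j hij p hp
    have hpL : (p : ℕ) < LL S := lt_of_lt_of_le p.2 (le_of_eq (length_Wd S))
    rw [List.get_eq_getElem, getElem_Wd hpL] at hp
    by_cases h : isLet S (p : ℕ)
    · rw [dif_pos h] at hp; cases hp
    · rw [dif_neg h] at hp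
      have hjidx : idx S (p : ℕ) = j := Sum.inr.inj hp
      have hj : j < dd S := hjidx ▸ idx_lt hpL h
      have hji : (posList S)[j]'hj ≤ (p : ℕ) := by
        have := getElem_posList_idx hpL h
        have h2 : (posList S)[j]'hj = firstOcc S (p : ℕ) := by
          rw [← this]; congr 1; exact hjidx.symm
        rw [h2]
        exact firstOcc_le S (p : ℕ)
      have hi' : i < dd S := lt_trans hij hj
      refine ⟨⟨(posList S)[i]'hi', by rw [length_Wd]; exact posList_lt_LL hi'⟩, ?_, ?_⟩
      · simp only [Fin.lt_def]
        exact lt_of_lt_of_le (posList_strictMono hi' hj hij) hji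
      · rw [List.get_eq_getElem]
        show (Wd S)[(posList S)[i]'hi']'_ = Sum.inr i
        rw [getElem_Wd (posList_lt_LL hi'), dif_neg (not_isLet_posList hi'), idx_getElem hi']

/-! ### Uw is a word -/

theorem isPWord_Uw {S : Finset (List (σ ⊕ ℕ))} (hS : ∀ w ∈ S, IsPWord 0 w)
    {w : List (σ ⊕ ℕ)} (hw : w ∈ S) : IsPWord 0 (Uw S w) := by
  have h1 : ∀ i : ℕ, Sum.inr i ∉ Uw S w := by
    intro i hi
    rw [Uw, List.mem_map] at hi
    obtain ⟨q, hq, heq⟩ := hi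
    have hqlen : q < w.length := by simpa using List.mem_takeWhile_imp hq
    rw [List.getD_eq_getElem _ _ hqlen] at heq
    exact absurd ((hS w hw).1 i (heq ▸ List.getElem_mem hqlen)) (Nat.not_lt_zero i)
  refine ⟨fun i hi => absurd hi (h1 i), fun i hi => absurd hi (Nat.not_lt_zero i),
    fun i j hij p hp => absurd ?_ (h1 j)⟩
  rw [← hp]
  exact (Uw S w).get_mem p

/-! ### cardinality bound -/

theorem dd_le {S : Finset (List (σ ⊕ ℕ))} [Fintype σ] (hS : ∀ w ∈ S, IsPWord 0 w) :
    dd S ≤ (Fintype.card σ + 1) ^ S.card := by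
  classical
  let f : ℕ → (↥S → Option σ) := fun p w => (w.1[p]?).bind Sum.getLeft?
  have entry : ∀ w ∈ S, ∀ n : ℕ, w[n]? = ((w[n]?).bind Sum.getLeft?).map Sum.inl := by
    intro w hw n
    cases hn : w[n]? with
    | none => rfl
    | some a =>
      cases a with
      | inl s => rfl
      | inr i =>
        obtain ⟨hlt, hv⟩ := List.getElem?_eq_some_iff.1 hn
        exact absurd ((hS w hw).1 i (hv ▸ List.getElem_mem hlt)) (Nat.not_lt_zero i)
  have hinj : ∀ p q : ℕ, f p = f q → sameCol S p q := by
    intro p q h w hw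
    rw [entry w hw p, entry w hw q]
    have h2 := congrFun h ⟨w, hw⟩
    simp only [f] at h2
    rw [h2]
  have hnd : ((posList S).map f).Nodup := by
    rw [List.Nodup, List.pairwise_map, List.pairwise_iff_getElem]
    intro i j hi hj hij heq
    exact not_sameCol_posList hi hj hij (hinj _ _ heq)
  have hle : ((posList S).map f).length ≤ Fintype.card (↥S → Option σ) := hnd.length_le_card
  rw [List.length_map] at hle
  calc dd S ≤ Fintype.card (↥S → Option σ) := hle
    _ = (Fintype.card σ + 1) ^ S.card := by
        rw [Fintype.card_fun, Fintype.card_option, Fintype.card_coe]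

end EnvAux

/-- For every finite alphabet `σ` and every `k ≥ 0` there is a finite bound `T` such that
every set of `k` words over `σ` admits a `d`-parameter envelope with `d ≤ T`. -/


theorem exists_envelope_bound (σ : Type) [Finite σ] [DecidableEq σ] (k : ℕ) :
    ∃ T : ℕ, ∀ S : Finset (List (σ ⊕ ℕ)), S.card = k → (∀ w ∈ S, IsPWord 0 w) →
      ∃ d ≤ T, ∃ (W : List (σ ⊕ ℕ)) (S' : Finset (List (σ ⊕ ℕ))),
        IsEnvelopeOf d W S S' := by
  classical
  haveI : Fintype σ := Fintype.ofFinite σ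
  refine ⟨(Fintype.card σ + 1) ^ k, fun S hk hS => ?_⟩
  refine ⟨EnvAux.dd S, by rw [← hk]; exact EnvAux.dd_le hS, EnvAux.Wd S,
    S.image (EnvAux.Uw S), EnvAux.isPWord_Wd S, ?_, ?_⟩
  · intro u hu
    rw [Finset.mem_image] at hu
    obtain ⟨w, hw, rfl⟩ := hu
    exact ⟨EnvAux.isPWord_Uw hS hw, EnvAux.length_Uw_le w⟩
  · rw [Finset.image_image]
    have : S.image (subst (EnvAux.Wd S) ∘ EnvAux.Uw S) = S.image id :=
      Finset.image_congr fun w hw => EnvAux.subst_Uw hw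
    rw [this, Finset.image_id]
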